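/- Define ι_n := min over families of n pairwise disjoint nonempty subsets {Q_i} of V of (1/n)∑_i ∂(Q_i)/π(Q_i), and ι̃_n := the same minimum restricted to partitions of V into n nonempty parts. Then 0 ≤ ι̃_n − ι_n ≤ 1/n. -/
import Mathlib


open Finset

/-- Outgoing boundary flow `∂(Q) = ∑_{u∈Q, v∉Q} K(u,v)π(u)`. -/
noncomputable def dpart {V : Type*} [Fintype V] [DecidableEq V]
    (K : V → V → ℝ) (π : V → ℝ) (Q : Finset V) : ℝ :=
  ∑ u ∈ Q, ∑ v ∈ Qᶜ, K u v * π u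

/-- `π(Q) = ∑_{u∈Q} π(u)`. -/
noncomputable def pim {V : Type*} (π : V → ℝ) (Q : Finset V) : ℝ :=
  ∑ u ∈ Q, π u

/-- The `n`-th isoperimetric constant: minimum of the mean normalized boundary over
families of `n` pairwise disjoint nonempty subsets of `V`. -/
noncomputable def iotaD {V : Type*} [Fintype V] [DecidableEq V]
    (K : V → V → ℝ) (π : V → ℝ) (n : ℕ) : ℝ :=
  sInf {x : ℝ | ∃ Q : Fin n → Finset V, (∀ i, (Q i).Nonempty) ∧
    Pairwise (Function.onFun Disjoint Q) ∧
    x = (∑ i, dpart K π (Q i) / pim π (Q i)) / n}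

/-- The `n`-th partition isoperimetric constant: minimum of the mean normalized boundary
over partitions of `V` into `n` nonempty parts. -/
noncomputable def iotaP {V : Type*} [Fintype V] [DecidableEq V]
    (K : V → V → ℝ) (π : V → ℝ) (n : ℕ) : ℝ :=
  sInf {x : ℝ | ∃ Q : Fin n → Finset V, (∀ i, (Q i).Nonempty) ∧
    Pairwise (Function.onFun Disjoint Q) ∧
    Finset.univ.biUnion Q = Finset.univ ∧
    x = (∑ i, dpart K π (Q i) / pim π (Q i)) / n}

lemma pim_pos' {V : Type*} (π : V → ℝ) (hπ : ∀ u, 0 < π u) {Q : Finset V}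
    (h : Q.Nonempty) : 0 < pim π Q :=
  Finset.sum_pos (fun u _ => hπ u) h

lemma dpart_nonneg' {V : Type*} [Fintype V] [DecidableEq V] (K : V → V → ℝ) (π : V → ℝ)
    (hK0 : ∀ u v, 0 ≤ K u v) (hπ : ∀ u, 0 < π u) (Q : Finset V) :
    0 ≤ dpart K π Q :=
  Finset.sum_nonneg fun u _ => Finset.sum_nonneg fun v _ =>
    mul_nonneg (hK0 u v) (hπ u).le

lemma dpart_le_pim' {V : Type*} [Fintype V] [DecidableEq V] (K : V → V → ℝ) (π : V → ℝ)
    (hK0 : ∀ u v, 0 ≤ K u v) (hK1 : ∀ u, ∑ v, K u v = 1) (hπ : ∀ u, 0 < π u)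
    (Q : Finset V) : dpart K π Q ≤ pim π Q := by
  unfold dpart pim
  refine Finset.sum_le_sum fun u _ => ?_
  rw [← Finset.sum_mul]
  have h1 : ∑ v ∈ Qᶜ, K u v ≤ 1 := by
    rw [← hK1 u]
    exact Finset.sum_le_sum_of_subset_of_nonneg (Finset.subset_univ _)
      (fun v _ _ => hK0 u v)
  calc (∑ v ∈ Qᶜ, K u v) * π u ≤ 1 * π u :=
        mul_le_mul_of_nonneg_right h1 (hπ u).le
    _ = π u := one_mul _

theorem iotaP_sub_iotaD_bounds {V : Type*} [Fintype V] [DecidableEq V]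
    (K : V → V → ℝ) (π : V → ℝ)
    (hK0 : ∀ u v, 0 ≤ K u v) (hK1 : ∀ u, ∑ v, K u v = 1)
    (hπ : ∀ u, 0 < π u) (hπ1 : ∑ u, π u = 1)
    (hstat : ∀ v, ∑ u, π u * K u v = π v)
    (n : ℕ) (hn : 0 < n) (hcard : n ≤ Fintype.card V) :
    0 ≤ iotaP K π n - iotaD K π n ∧ iotaP K π n - iotaD K π n ≤ 1 / n := by
  have hn' : (0:ℝ) < n := by exact_mod_cast hn
  set setD := {x : ℝ | ∃ Q : Fin n → Finset V, (∀ i, (Q i).Nonempty) ∧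
    Pairwise (Function.onFun Disjoint Q) ∧
    x = (∑ i, dpart K π (Q i) / pim π (Q i)) / n} with hsetD
  set setP := {x : ℝ | ∃ Q : Fin n → Finset V, (∀ i, (Q i).Nonempty) ∧
    Pairwise (Function.onFun Disjoint Q) ∧
    Finset.univ.biUnion Q = Finset.univ ∧
    x = (∑ i, dpart K π (Q i) / pim π (Q i)) / n} with hsetP
  -- every element of setD is nonnegative
  have hD0 : ∀ x ∈ setD, (0:ℝ) ≤ x := by
    rintro x ⟨Q, hne, -, rfl⟩
    apply div_nonneg _ hn'.le
    exact Finset.sum_nonneg fun i _ =>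
      div_nonneg (dpart_nonneg' K π hK0 hπ _) (pim_pos' π hπ (hne i)).le
  have hbddD : BddBelow setD := ⟨0, fun x hx => hD0 x hx⟩
  have hPsubD : setP ⊆ setD := by
    rintro x ⟨Q, hne, hdisj, -, rfl⟩
    exact ⟨Q, hne, hdisj, rfl⟩
  have hbddP : BddBelow setP := hbddD.mono hPsubD
  -- setP is nonempty: build an explicit partition into n nonempty parts
  have hPne : setP.Nonempty := by
    let e := Fintype.equivFin V
    have hn1 : ∀ v : V, min (e v).val (n-1) < n := by
      intro v; omega
    let g : V → Fin n := fun v => ⟨min (e v).val (n-1), hn1 v⟩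
    let Q : Fin n → Finset V := fun i => Finset.univ.filter (fun v => g v = i)
    have hne : ∀ i, (Q i).Nonempty := by
      intro i
      refine ⟨e.symm ⟨i.val, lt_of_lt_of_le i.isLt hcard⟩, ?_⟩
      simp only [Q, Finset.mem_filter, Finset.mem_univ, true_and]
      have h1 : (e (e.symm ⟨i.val, lt_of_lt_of_le i.isLt hcard⟩)).val = i.val := by
        rw [Equiv.apply_symm_apply]
      apply Fin.ext
      simp only [g, h1]
      have := i.isLt; omega
    have hdisj : Pairwise (Function.onFun Disjoint Q) := by
      intro i j hij
      rw [Function.onFun, Finset.disjoint_left]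
      intro v hvi hvj
      simp only [Q, Finset.mem_filter] at hvi hvj
      exact hij (hvi.2 ▸ hvj.2)
    have hcover : Finset.univ.biUnion Q = Finset.univ := by
      apply Finset.eq_univ_iff_forall.2
      intro v
      exact Finset.mem_biUnion.2 ⟨g v, Finset.mem_univ _, by simp [Q]⟩
    exact ⟨_, Q, hne, hdisj, hcover, rfl⟩
  have hDne : setD.Nonempty := hPne.mono hPsubD
  -- key: every x in setD has a y in setP with y ≤ x + 1/n
  have key : ∀ x ∈ setD, ∃ y ∈ setP, y ≤ x + 1/n := by
    rintro x ⟨Q, hne, hdisj, rfl⟩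
    let i0 : Fin n := ⟨0, hn⟩
    let R : Finset V := (Finset.univ.biUnion Q)ᶜ
    have hRdisj : ∀ j, Disjoint R (Q j) := by
      intro j
      rw [Finset.disjoint_left]
      intro v hv hvj
      simp only [R, Finset.mem_compl, Finset.mem_biUnion] at hv
      exact hv ⟨j, Finset.mem_univ _, hvj⟩
    let Q' : Fin n → Finset V := fun i => if i = i0 then Q i0 ∪ R else Q i
    have hne' : ∀ i, (Q' i).Nonempty := by
      intro i
      by_cases h : i = i0
      · simp only [Q', if_pos h]
        exact (hne i0).mono Finset.subset_union_left
      · simpa only [Q', if_neg h] using hne i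
    have hdisj' : Pairwise (Function.onFun Disjoint Q') := by
      intro i j hij
      rw [Function.onFun]
      by_cases hi : i = i0
      · have hj : j ≠ i0 := by rw [hi] at hij; exact fun h => hij h.symm
        simp only [Q', if_pos hi, if_neg hj]
        exact Finset.disjoint_union_left.2 ⟨hi ▸ hdisj hij, hRdisj j⟩
      · by_cases hj : j = i0
        · simp only [Q', if_neg hi, if_pos hj]
          exact Finset.disjoint_union_right.2 ⟨hj ▸ hdisj hij, (hRdisj i).symm⟩
        · simpa only [Q', if_neg hi, if_neg hj] using hdisj hij
    have hcover' : Finset.univ.biUnion Q' = Finset.univ := by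
      apply Finset.eq_univ_iff_forall.2
      intro v
      rw [Finset.mem_biUnion]
      by_cases hv : v ∈ Finset.univ.biUnion Q
      · obtain ⟨j, -, hvj⟩ := Finset.mem_biUnion.1 hv
        by_cases hj : j = i0
        · exact ⟨i0, Finset.mem_univ _, by
            simp only [Q', if_pos rfl]; exact Finset.mem_union_left _ (hj ▸ hvj)⟩
        · exact ⟨j, Finset.mem_univ _, by simp only [Q', if_neg hj]; exact hvj⟩
      · exact ⟨i0, Finset.mem_univ _, by
          simp only [Q', if_pos rfl]
          exact Finset.mem_union_right _ (Finset.mem_compl.2 hv)⟩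
    refine ⟨(∑ i, dpart K π (Q' i) / pim π (Q' i)) / n,
      ⟨Q', hne', hdisj', hcover', rfl⟩, ?_⟩
    -- sum comparison
    set f : Fin n → ℝ := fun i => dpart K π (Q i) / pim π (Q i) with hf
    set f' : Fin n → ℝ := fun i => dpart K π (Q' i) / pim π (Q' i) with hf'
    have hsum : ∑ i, f' i ≤ ∑ i, f i + 1 := by
      have ha : ∑ i ∈ Finset.univ.erase i0, f' i = ∑ i ∈ Finset.univ.erase i0, f i := by
        refine Finset.sum_congr rfl fun i hi => ?_
        have hne0 : i ≠ i0 := (Finset.mem_erase.1 hi).1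
        simp only [hf, hf', Q', if_neg hne0]
      have hb := Finset.add_sum_erase Finset.univ f' (Finset.mem_univ i0)
      have hc := Finset.add_sum_erase Finset.univ f (Finset.mem_univ i0)
      have hf'0 : f' i0 ≤ 1 := by
        rw [hf']
        exact (div_le_one (pim_pos' π hπ (hne' i0))).2
          (dpart_le_pim' K π hK0 hK1 hπ _)
      have hf0 : 0 ≤ f i0 :=
        div_nonneg (dpart_nonneg' K π hK0 hπ _) (pim_pos' π hπ (hne i0)).le
      linarith
    calc (∑ i, f' i) / n ≤ (∑ i, f i + 1) / n := by
          exact div_le_div_of_nonneg_right hsum hn'.le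
      _ = (∑ i, f i) / n + 1 / n := add_div _ _ _
  constructor
  · rw [sub_nonneg, iotaP, iotaD]
    exact csInf_le_csInf hbddD hPne hPsubD
  · rw [sub_le_iff_le_add, iotaP, iotaD]
    rw [add_comm]
    have : sInf setP - 1/n ≤ sInf setD := by
      apply le_csInf hDne
      intro x hx
      obtain ⟨y, hy, hyx⟩ := key x hx
      have := csInf_le hbddP hy
      linarith
    linarith
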